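/- Let m ≥ 1 and P := X₀^m X₁^m (X₀ + X₁), a nonzero homogeneous polynomial of degree 2m+1. Then the apolar ideal Ann(P) is the ideal of ℂ[X₀,X₁] generated by the two homogeneous polynomials G₁ := ∑_{k=0}^{m+1} (−1)^k X₀^{m+1−k} X₁^k (of degree m+1) and G₂ := X₁^{m+2} (here the generators are viewed as polynomials in the dual variables acting by ∂/∂X₀, ∂/∂X₁), and the Waring rank satisfies rk(X₀^m X₁^m (X₀ + X₁)) = m + 1. -/

import Mathlib

/-!
Common definitions: the apolar action of `ℂ[X₀,X₁]` on itself
(`Q • P := Q(∂/∂X₀, ∂/∂X₁)(P)`), the apolar ideal `Ann(P)` and its homogeneous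
components, the cokernel `C_P^d` of `Q ↦ Q • P : ℂ[X₀,X₁]_d → ℂ[X₀,X₁]_{l-d}`,
the invariant `d₁(P)` and the Waring rank.
-/

open MvPolynomial

noncomputable section

/-- The partial derivative `∂/∂Xᵢ` as a `ℂ`-linear endomorphism of `ℂ[X₀,X₁]`. -/
def pd (i : Fin 2) : Module.End ℂ (MvPolynomial (Fin 2) ℂ) := (pderiv (R := ℂ) i).toLinearMap

lemma pd_comm : Commute (pd 0) (pd 1) := by
  apply LinearMap.ext
  intro P
  induction P using MvPolynomial.induction_on' with
  | monomial s a =>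
      simp [pd, Module.End.mul_apply, pderiv_monomial]
      rw [tsub_right_comm, mul_right_comm]
  | add p q hp hq => simp_all [Module.End.mul_apply, map_add]

/-- The endomorphism `∂₀^{m 0} ∘ ∂₁^{m 1}` of `ℂ[X₀,X₁]`, as a monoid homomorphism in the
exponent `m`. -/
def derivMonomialHom :
    Multiplicative (Fin 2 →₀ ℕ) →* Module.End ℂ (MvPolynomial (Fin 2) ℂ) where
  toFun m := pd 0 ^ (Multiplicative.toAdd m 0) * pd 1 ^ (Multiplicative.toAdd m 1)
  map_one' := by simp
  map_mul' a b := by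
    simp only [toAdd_mul, Finsupp.add_apply, pow_add]
    exact (Commute.pow_pow pd_comm _ _).mul_mul_mul_comm _ _

/-- The representation of `ℂ[X₀,X₁]` by constant-coefficient differential operators:
`diffOp Q = Q(∂/∂X₀, ∂/∂X₁)`.  It is the morphism of `ℂ`-algebras sending `X i` to
`∂/∂Xᵢ`. -/
def diffOp : MvPolynomial (Fin 2) ℂ →ₐ[ℂ] Module.End ℂ (MvPolynomial (Fin 2) ℂ) :=
  AddMonoidAlgebra.lift ℂ _ (Fin 2 →₀ ℕ) derivMonomialHom

/-- The apolar action `Q • P := Q(∂/∂X₀, ∂/∂X₁)(P)`. -/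
def apolar (Q P : MvPolynomial (Fin 2) ℂ) : MvPolynomial (Fin 2) ℂ := diffOp Q P

/-- For fixed `P`, the map `Q ↦ Q • P` is `ℂ`-linear in `Q`. -/
def apolarLM (P : MvPolynomial (Fin 2) ℂ) :
    MvPolynomial (Fin 2) ℂ →ₗ[ℂ] MvPolynomial (Fin 2) ℂ :=
  (LinearMap.applyₗ P).comp diffOp.toLinearMap

lemma apolarLM_apply (P Q : MvPolynomial (Fin 2) ℂ) : apolarLM P Q = apolar Q P := rfl

/-- The apolar ideal `Ann(P) = {Q | Q • P = 0}`. -/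
def annIdeal (P : MvPolynomial (Fin 2) ℂ) : Ideal (MvPolynomial (Fin 2) ℂ) where
  carrier := {Q | apolar Q P = 0}
  zero_mem' := by simp [apolar]
  add_mem' := by
    intro a b ha hb
    simp only [Set.mem_setOf_eq, apolar, map_add, LinearMap.add_apply] at *
    rw [ha, hb, add_zero]
  smul_mem' := by
    intro c Q hQ
    simp only [Set.mem_setOf_eq, smul_eq_mul, apolar, map_mul, Module.End.mul_apply] at *
    rw [hQ, map_zero]

/-- The degree-`d` homogeneous component `Ann(P)_d` of the apolar ideal of `P`. -/
def annComp (P : MvPolynomial (Fin 2) ℂ) (d : ℕ) :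
    Submodule ℂ (MvPolynomial (Fin 2) ℂ) :=
  homogeneousSubmodule (Fin 2) ℂ d ⊓ LinearMap.ker (apolarLM P)

/-- The image of `ℂ[X₀,X₁]_d` under `Q ↦ Q • P`, viewed as a subspace of `ℂ[X₀,X₁]_{l-d}`
(for `P` homogeneous of degree `l` and `d ≤ l` the image is indeed contained in
`ℂ[X₀,X₁]_{l-d}`). -/
def apolarImage (P : MvPolynomial (Fin 2) ℂ) (l d : ℕ) :
    Submodule ℂ (homogeneousSubmodule (Fin 2) ℂ (l - d)) :=
  Submodule.comap (homogeneousSubmodule (Fin 2) ℂ (l - d)).subtype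
    (Submodule.map (apolarLM P) (homogeneousSubmodule (Fin 2) ℂ d))

/-- `C_P^d`: the cokernel of the `ℂ`-linear map `ℂ[X₀,X₁]_d → ℂ[X₀,X₁]_{l-d}`, `Q ↦ Q • P`. -/
abbrev ApolarCoker (P : MvPolynomial (Fin 2) ℂ) (l d : ℕ) :=
  (homogeneousSubmodule (Fin 2) ℂ (l - d)) ⧸ apolarImage P l d

/-- `d₁(P)`: the minimal degree of a nonzero homogeneous polynomial in `Ann(P)`. -/
def d1 (P : MvPolynomial (Fin 2) ℂ) : ℕ :=
  sInf {d | ∃ Q : MvPolynomial (Fin 2) ℂ, Q ≠ 0 ∧ Q.IsHomogeneous d ∧ apolar Q P = 0}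

/-- The Waring rank of a binary form `P` of degree `l`: the least `r` such that `P` is a sum
of `r` `l`-th powers of linear forms. -/
def waringRank (l : ℕ) (P : MvPolynomial (Fin 2) ℂ) : ℕ :=
  sInf {r | ∃ lam : Fin r → MvPolynomial (Fin 2) ℂ,
    (∀ i, (lam i).IsHomogeneous 1) ∧ P = ∑ i, lam i ^ l}

end

noncomputable section

-- exponent finsupp
def e (a b : ℕ) : Fin 2 →₀ ℕ := Finsupp.single 0 a + Finsupp.single 1 b

@[simp] lemma e_apply0 (a b : ℕ) : e a b 0 = a := by simp [e]
@[simp] lemma e_apply1 (a b : ℕ) : e a b 1 = b := by simp [e]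

lemma fin2_eq (s : Fin 2 →₀ ℕ) : s = e (s 0) (s 1) := by
  ext i
  fin_cases i <;> simp [e]

lemma pd_pow_monomial (i : Fin 2) (n : ℕ) (s : Fin 2 →₀ ℕ) (c : ℂ) :
    (pd i ^ n) (monomial s c) =
      monomial (s - Finsupp.single i n) (((s i).descFactorial n : ℂ) * c) := by
  induction n generalizing s c with
  | zero => simp
  | succ n ih =>
      have hd : ∀ a : ℕ, a.descFactorial (n+1) = a * (a-1).descFactorial n := by
        intro a
        cases a with
        | zero => simp
        | succ a => rw [Nat.succ_descFactorial_succ]; simp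
      rw [pow_succ, Module.End.mul_apply]
      have h1 : (pd i) (monomial s c) = monomial (s - Finsupp.single i 1) (c * s i) := by
        simp [pd, pderiv_monomial]
      rw [h1, ih]
      rw [tsub_tsub, ← Finsupp.single_add, Finsupp.tsub_apply, Finsupp.single_eq_same,
        hd (s i), Nat.add_comm 1 n]
      push_cast
      ring_nf

end

noncomputable section

def desc2 (s t : Fin 2 →₀ ℕ) : ℕ := (s 0).descFactorial (t 0) * (s 1).descFactorial (t 1)

lemma diffOp_monomial (t : Fin 2 →₀ ℕ) (c : ℂ) :
    diffOp (monomial t c) = c • (pd 0 ^ (t 0) * pd 1 ^ (t 1)) := by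
  rw [diffOp, ← single_eq_monomial]
  erw [AddMonoidAlgebra.lift_single]
  rfl

lemma apolar_monomial (t s : Fin 2 →₀ ℕ) (c a : ℂ) :
    apolar (monomial t c) (monomial s a) =
      monomial (s - t) ((desc2 s t : ℂ) * c * a) := by
  rw [apolar, diffOp_monomial]
  rw [LinearMap.smul_apply, Module.End.mul_apply, pd_pow_monomial, pd_pow_monomial]
  have h0 : (s - Finsupp.single (1 : Fin 2) (t 1)) 0 = s 0 := by
    rw [Finsupp.tsub_apply, Finsupp.single_eq_of_ne' (by decide : (1 : Fin 2) ≠ 0)]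
    rfl
  rw [h0, tsub_tsub, add_comm (Finsupp.single 1 (t 1)) (Finsupp.single 0 (t 0))]
  have ht : Finsupp.single 0 (t 0) + Finsupp.single 1 (t 1) = t := (fin2_eq t).symm
  rw [ht, smul_monomial, desc2]
  congr 1
  push_cast
  rw [smul_eq_mul]
  ring

end

noncomputable section

lemma apolar_add_left (p q P : MvPolynomial (Fin 2) ℂ) :
    apolar (p + q) P = apolar p P + apolar q P := by
  simp [apolar, map_add]

lemma apolar_add_right (p P Q : MvPolynomial (Fin 2) ℂ) :
    apolar p (P + Q) = apolar p P + apolar p Q := by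
  simp [apolar, map_add]

lemma apolar_smul_left (c : ℂ) (p P : MvPolynomial (Fin 2) ℂ) :
    apolar (c • p) P = c • apolar p P := by
  simp [apolar, map_smul]

lemma apolar_mul (p q P : MvPolynomial (Fin 2) ℂ) :
    apolar (p * q) P = apolar p (apolar q P) := by
  simp only [apolar, map_mul, Module.End.mul_apply]

lemma apolar_zero_right (p : MvPolynomial (Fin 2) ℂ) : apolar p 0 = 0 := by
  simp [apolar]

lemma apolar_zero_left (P : MvPolynomial (Fin 2) ℂ) : apolar 0 P = 0 := by
  simp [apolar]

lemma desc2_eq_zero (s t : Fin 2 →₀ ℕ) (h : ¬ t ≤ s) : desc2 s t = 0 := by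
  rw [Finsupp.le_def] at h
  push_neg at h
  obtain ⟨i, hi⟩ := h
  rw [desc2]
  have h01 : i = 0 ∨ i = 1 := by omega
  rcases h01 with rfl | rfl
  · rw [Nat.descFactorial_eq_zero_iff_lt.2 hi, zero_mul]
  · rw [Nat.descFactorial_eq_zero_iff_lt.2 hi, mul_zero]

lemma coeff_apolar_le (Q : MvPolynomial (Fin 2) ℂ) (s τ : Fin 2 →₀ ℕ) (h : τ ≤ s) :
    coeff τ (apolar Q (monomial s 1)) = (desc2 s (s - τ) : ℂ) * coeff (s - τ) Q := by
  induction Q using MvPolynomial.induction_on' with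
  | monomial t c =>
      rw [apolar_monomial, mul_one, coeff_monomial, coeff_monomial]
      by_cases ht : t ≤ s
      · have hiff : s - t = τ ↔ t = s - τ := by
          constructor
          · rintro rfl; rw [tsub_tsub_cancel_of_le ht]
          · rintro rfl; rw [tsub_tsub_cancel_of_le h]
        by_cases he : s - t = τ
        · rw [if_pos he, if_pos (hiff.1 he), ← he, tsub_tsub_cancel_of_le ht]
        · rw [if_neg he, if_neg fun hh => he (hiff.2 hh), mul_zero]
      · rw [desc2_eq_zero s t ht]
        have h2 : ¬ (t = s - τ) := fun hh => ht (hh ▸ tsub_le_self)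
        rw [if_neg h2, mul_zero]
        simp
  | add p q hp hq => rw [apolar_add_left, coeff_add, hp, hq, coeff_add, mul_add]

lemma coeff_apolar_not_le (Q : MvPolynomial (Fin 2) ℂ) (s τ : Fin 2 →₀ ℕ) (h : ¬ τ ≤ s) :
    coeff τ (apolar Q (monomial s 1)) = 0 := by
  induction Q using MvPolynomial.induction_on' with
  | monomial t c =>
      rw [apolar_monomial, coeff_monomial, if_neg]
      intro hh
      exact h (hh ▸ tsub_le_self)
  | add p q hp hq => rw [apolar_add_left, coeff_add, hp, hq, add_zero]

end

noncomputable section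

lemma e_sub (c d a b : ℕ) : e c d - e a b = e (c - a) (d - b) := by
  ext i
  rw [Finsupp.tsub_apply]
  have h01 : i = 0 ∨ i = 1 := by omega
  rcases h01 with rfl | rfl <;> simp

lemma e_le_iff (a b c d : ℕ) : e a b ≤ e c d ↔ a ≤ c ∧ b ≤ d := by
  rw [Finsupp.le_def]
  constructor
  · intro h
    exact ⟨by simpa using h 0, by simpa using h 1⟩
  · rintro ⟨h1, h2⟩ i
    have h01 : i = 0 ∨ i = 1 := by omega
    rcases h01 with rfl | rfl <;> simpa

lemma desc2_e (c d a b : ℕ) :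
    desc2 (e c d) (e a b) = c.descFactorial a * d.descFactorial b := by
  rw [desc2]; simp

def Pm (m : ℕ) : MvPolynomial (Fin 2) ℂ := X 0 ^ m * X 1 ^ m * (X 0 + X 1)

lemma X_pow_mul_X_pow (a b : ℕ) :
    (X 0 : MvPolynomial (Fin 2) ℂ) ^ a * X 1 ^ b = monomial (e a b) 1 := by
  rw [X_pow_eq_monomial, X_pow_eq_monomial, monomial_mul, one_mul]
  rfl

lemma Pm_eq (m : ℕ) : Pm m = monomial (e (m+1) m) 1 + monomial (e m (m+1)) 1 := by
  rw [Pm]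
  rw [← X_pow_mul_X_pow (m+1) m, ← X_pow_mul_X_pow m (m+1)]
  ring

lemma chain (m : ℕ) (Q : MvPolynomial (Fin 2) ℂ) (hQ : apolar Q (Pm m) = 0)
    (hdeg : ∀ s ∈ Q.support, s 0 ≤ m) :
    ∀ b, b ≤ m + 1 → ∀ a, a ≤ m → coeff (e a b) Q = 0 := by
  have hcoeff : ∀ τ : Fin 2 →₀ ℕ,
      coeff τ (apolar Q (monomial (e (m+1) m) 1)) +
      coeff τ (apolar Q (monomial (e m (m+1)) 1)) = 0 := by
    intro τ
    rw [← coeff_add, ← apolar_add_right, ← Pm_eq, hQ, coeff_zero]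
  have htop : ∀ b, coeff (e (m+1) b) Q = 0 := by
    intro b
    by_contra hc
    have := hdeg (e (m+1) b) (mem_support_iff.2 hc)
    simp at this
  intro b
  induction b with
  | zero =>
      intro _ a ha
      have h := hcoeff (e (m-a) (m+1))
      rw [coeff_apolar_not_le Q _ _ (by rw [e_le_iff]; omega),
        coeff_apolar_le Q _ _ (by rw [e_le_iff]; omega), zero_add,
        e_sub, desc2_e] at h
      have ha' : m - (m - a) = a := by omega
      have hb' : m + 1 - (m + 1) = 0 := by omega
      rw [ha', hb'] at h
      have hne : ((m.descFactorial a * Nat.descFactorial (m+1) 0 : ℕ) : ℂ) ≠ 0 := by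
        rw [Nat.cast_ne_zero, Nat.descFactorial_zero, mul_one]
        intro hz
        have := Nat.descFactorial_eq_zero_iff_lt.1 hz
        omega
      exact (mul_eq_zero.1 h).resolve_left hne
  | succ b ih =>
      intro hb a ha
      have h := hcoeff (e (m-a) (m-b))
      rw [coeff_apolar_le Q _ _ (by rw [e_le_iff]; omega),
        coeff_apolar_le Q _ _ (by rw [e_le_iff]; omega),
        e_sub, e_sub, desc2_e, desc2_e] at h
      have e1 : m + 1 - (m - a) = a + 1 := by omega
      have e2 : m - (m - b) = b := by omega
      have e3 : m - (m - a) = a := by omega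
      have e4 : m + 1 - (m - b) = b + 1 := by omega
      rw [e1, e2, e3, e4] at h
      have hz1 : coeff (e (a+1) b) Q = 0 := by
        by_cases haa : a + 1 ≤ m
        · exact ih (by omega) (a+1) haa
        · have : a + 1 = m + 1 := by omega
          rw [this]; exact htop b
      rw [hz1, mul_zero, zero_add] at h
      have hne : ((m.descFactorial a * Nat.descFactorial (m+1) (b+1) : ℕ) : ℂ) ≠ 0 := by
        rw [Nat.cast_ne_zero, Nat.mul_ne_zero_iff]
        constructor
        · intro hz; have := Nat.descFactorial_eq_zero_iff_lt.1 hz; omega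
        · intro hz; have := Nat.descFactorial_eq_zero_iff_lt.1 hz; omega
      exact (mul_eq_zero.1 h).resolve_left hne

end

noncomputable section

lemma apolar_sum {α : Type*} (s : Finset α) (f : α → MvPolynomial (Fin 2) ℂ)
    (P : MvPolynomial (Fin 2) ℂ) :
    apolar (∑ i ∈ s, f i) P = ∑ i ∈ s, apolar (f i) P :=
  map_sum (apolarLM P) f s

lemma desc_id (m j : ℕ) (hj : j ≤ m) :
    (m+1).descFactorial (m+1-j) * m.descFactorial j
      = m.descFactorial (m-j) * (m+1).descFactorial (j+1) := by
  have h1 : Nat.factorial j * (m+1).descFactorial (m+1-j) = Nat.factorial (m+1) := by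
    have := Nat.factorial_mul_descFactorial (show m+1-j ≤ m+1 by omega)
    rwa [show m+1-(m+1-j) = j by omega] at this
  have h2 : Nat.factorial (m-j) * m.descFactorial j = Nat.factorial m := by
    have := Nat.factorial_mul_descFactorial (show j ≤ m from hj)
    rwa [] at this
  have h3 : Nat.factorial j * m.descFactorial (m-j) = Nat.factorial m := by
    have := Nat.factorial_mul_descFactorial (show m-j ≤ m by omega)
    rwa [show m-(m-j) = j by omega] at this
  have h4 : Nat.factorial (m-j) * (m+1).descFactorial (j+1) = Nat.factorial (m+1) := by
    have := Nat.factorial_mul_descFactorial (show j+1 ≤ m+1 by omega)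
    rwa [show m+1-(j+1) = m-j by omega] at this
  have key : (Nat.factorial j * Nat.factorial (m-j)) * ((m+1).descFactorial (m+1-j) * m.descFactorial j)
      = (Nat.factorial j * Nat.factorial (m-j)) * (m.descFactorial (m-j) * (m+1).descFactorial (j+1)) := by
    calc (Nat.factorial j * Nat.factorial (m-j)) * ((m+1).descFactorial (m+1-j) * m.descFactorial j)
        = (Nat.factorial j * (m+1).descFactorial (m+1-j)) * (Nat.factorial (m-j) * m.descFactorial j) := by ring
      _ = Nat.factorial (m+1) * Nat.factorial m := by rw [h1, h2]
      _ = (Nat.factorial j * m.descFactorial (m-j)) * (Nat.factorial (m-j) * (m+1).descFactorial (j+1)) := by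
          rw [h3, h4]; ring
      _ = (Nat.factorial j * Nat.factorial (m-j)) * (m.descFactorial (m-j) * (m+1).descFactorial (j+1)) := by ring
  exact Nat.eq_of_mul_eq_mul_left (by positivity) key

def G1 (m : ℕ) : MvPolynomial (Fin 2) ℂ :=
  ∑ k ∈ Finset.range (m + 2), (-1 : ℂ) ^ k • ((X 0 : MvPolynomial (Fin 2) ℂ) ^ (m + 1 - k) * X 1 ^ k)

lemma apolar_G2 (m : ℕ) : apolar ((X 1 : MvPolynomial (Fin 2) ℂ) ^ (m+2)) (Pm m) = 0 := by
  have hX : (X 1 : MvPolynomial (Fin 2) ℂ) ^ (m+2) = monomial (e 0 (m+2)) 1 := by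
    have he : e 0 (m+2) = Finsupp.single 1 (m+2) := by simp [e]
    rw [X_pow_eq_monomial, he]
  rw [hX, Pm_eq, apolar_add_right, apolar_monomial, apolar_monomial, desc2_e, desc2_e,
    Nat.descFactorial_of_lt (show m < m+2 by omega),
    Nat.descFactorial_of_lt (show m+1 < m+2 by omega)]
  simp

lemma apolar_G1 (m : ℕ) : apolar (G1 m) (Pm m) = 0 := by
  have step : ∀ k ∈ Finset.range (m+2),
      apolar ((-1 : ℂ) ^ k • ((X 0 : MvPolynomial (Fin 2) ℂ) ^ (m + 1 - k) * X 1 ^ k)) (Pm m)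
        = (-1 : ℂ)^k • monomial (e k (m-k))
            (((m+1).descFactorial (m+1-k) * m.descFactorial k : ℕ) : ℂ)
          + (-1 : ℂ)^k • monomial (e (k-1) (m+1-k))
            ((m.descFactorial (m+1-k) * (m+1).descFactorial k : ℕ) : ℂ) := by
    intro k hk
    rw [Finset.mem_range] at hk
    rw [apolar_smul_left, X_pow_mul_X_pow, Pm_eq, apolar_add_right, apolar_monomial,
      apolar_monomial, e_sub, e_sub, desc2_e, desc2_e,
      show m+1-(m+1-k) = k by omega, show m-(m+1-k) = k-1 by omega, smul_add]
    push_cast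
    ring_nf
  rw [G1, apolar_sum, Finset.sum_congr rfl step, Finset.sum_add_distrib]
  have hA : ∑ k ∈ Finset.range (m+2), (-1 : ℂ)^k • monomial (e k (m-k))
      (((m+1).descFactorial (m+1-k) * m.descFactorial k : ℕ) : ℂ)
      = ∑ k ∈ Finset.range (m+1), (-1 : ℂ)^k • monomial (e k (m-k))
      (((m+1).descFactorial (m+1-k) * m.descFactorial k : ℕ) : ℂ) := by
    rw [Finset.sum_range_succ, Nat.descFactorial_of_lt (show m < m+1 by omega)]
    simp
  have hB : ∑ k ∈ Finset.range (m+2), (-1 : ℂ)^k • monomial (e (k-1) (m+1-k))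
      ((m.descFactorial (m+1-k) * (m+1).descFactorial k : ℕ) : ℂ)
      = ∑ j ∈ Finset.range (m+1), (-1 : ℂ)^(j+1) • monomial (e j (m-j))
      ((m.descFactorial (m-j) * (m+1).descFactorial (j+1) : ℕ) : ℂ) := by
    rw [Finset.sum_range_succ']
    simp only [Nat.sub_zero, Nat.zero_sub, pow_zero, Nat.descFactorial_zero, Nat.mul_one]
    rw [Nat.descFactorial_of_lt (show m < m+1 by omega)]
    simp only [Nat.cast_zero, monomial_zero, smul_zero, one_smul, add_zero]
    apply Finset.sum_congr rfl
    intro j hj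
    rw [show j+1-1 = j from rfl, Nat.succ_sub_succ]
  rw [hA, hB, ← Finset.sum_add_distrib]
  apply Finset.sum_eq_zero
  intro j hj
  rw [Finset.mem_range] at hj
  rw [← desc_id m j (by omega), pow_succ, mul_neg_one, neg_smul, add_neg_cancel]
end

noncomputable section

lemma dvd_X1_pow (n : ℕ) (Q : MvPolynomial (Fin 2) ℂ)
    (h : ∀ s ∈ Q.support, n ≤ s 1) : (X 1 : MvPolynomial (Fin 2) ℂ) ^ n ∣ Q := by
  refine ⟨∑ s ∈ Q.support, monomial (s - Finsupp.single 1 n) (coeff s Q), ?_⟩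
  rw [Finset.mul_sum]
  rw [show ((X 1 : MvPolynomial (Fin 2) ℂ) ^ n) = monomial (Finsupp.single 1 n) 1 from
    X_pow_eq_monomial]
  have hstep : (∑ s ∈ Q.support,
      monomial (Finsupp.single 1 n) 1 * monomial (s - Finsupp.single 1 n) (coeff s Q))
      = ∑ s ∈ Q.support, monomial s (coeff s Q) := by
    apply Finset.sum_congr rfl
    intro s hs
    rw [monomial_mul, one_mul]
    have hexp : (Finsupp.single (1 : Fin 2) n) + (s - Finsupp.single 1 n) = s := by
      ext i
      rw [Finsupp.add_apply, Finsupp.tsub_apply]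
      have h01 : i = 0 ∨ i = 1 := by omega
      have := h s hs
      rcases h01 with rfl | rfl <;> simp <;> omega
    rw [hexp]
  rw [hstep, support_sum_monomial_coeff]

lemma low_deg_case (m : ℕ) (Q : MvPolynomial (Fin 2) ℂ) (hQ : apolar Q (Pm m) = 0)
    (hdeg : ∀ s ∈ Q.support, s 0 ≤ m) : (X 1 : MvPolynomial (Fin 2) ℂ) ^ (m+2) ∣ Q := by
  apply dvd_X1_pow
  intro s hs
  by_contra hc
  push_neg at hc
  have h0 := hdeg s hs
  have := chain m Q hQ hdeg (s 1) (by omega) (s 0) h0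
  rw [← fin2_eq s] at this
  exact mem_support_iff.1 hs this

end

noncomputable section

def G1comp (m : ℕ) : MvPolynomial (Fin 2) ℂ :=
  ∑ k ∈ Finset.range (m+1), (-1 : ℂ) ^ (k+1) • ((X 0 : MvPolynomial (Fin 2) ℂ) ^ (m - k) * X 1 ^ (k+1))

lemma G1_split (m : ℕ) : G1 m = (X 0 : MvPolynomial (Fin 2) ℂ) ^ (m+1) + G1comp m := by
  rw [G1, Finset.sum_range_succ', G1comp]
  simp only [Nat.succ_sub_succ, pow_zero, one_smul, Nat.sub_zero, pow_zero, mul_one]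
  rw [add_comm]

lemma G1comp_support (m : ℕ) : ∀ s ∈ (G1comp m).support, s 0 ≤ m := by
  intro s hs
  have := MvPolynomial.support_sum hs
  rw [Finset.mem_biUnion] at this
  obtain ⟨k, hk, hsk⟩ := this
  rw [Finset.mem_range] at hk
  have h2 := MvPolynomial.support_smul hsk
  rw [X_pow_mul_X_pow] at h2
  have h3 := MvPolynomial.support_monomial (s := e (m-k) (k+1)) (a := (1:ℂ))
  rw [if_neg one_ne_zero] at h3
  rw [h3, Finset.mem_singleton] at h2
  rw [h2]
  simp

lemma apolar_sub_left (p q P : MvPolynomial (Fin 2) ℂ) :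
    apolar (p - q) P = apolar p P - apolar q P :=
  map_sub (apolarLM P) p q

lemma mem_span_of_apolar_zero (m : ℕ) (hm : 1 ≤ m) :
    ∀ n : ℕ, ∀ Q : MvPolynomial (Fin 2) ℂ, (∀ s ∈ Q.support, s 0 ≤ n) →
      apolar Q (Pm m) = 0 →
      Q ∈ Ideal.span {G1 m, (X 1 : MvPolynomial (Fin 2) ℂ) ^ (m+2)} := by
  have hG2mem : (X 1 : MvPolynomial (Fin 2) ℂ) ^ (m+2) ∈
      Ideal.span {G1 m, (X 1 : MvPolynomial (Fin 2) ℂ) ^ (m+2)} :=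
    Ideal.subset_span (by simp)
  have hG1mem : G1 m ∈ Ideal.span {G1 m, (X 1 : MvPolynomial (Fin 2) ℂ) ^ (m+2)} :=
    Ideal.subset_span (by simp)
  have hbase : ∀ Q : MvPolynomial (Fin 2) ℂ, (∀ s ∈ Q.support, s 0 ≤ m) →
      apolar Q (Pm m) = 0 →
      Q ∈ Ideal.span {G1 m, (X 1 : MvPolynomial (Fin 2) ℂ) ^ (m+2)} := by
    intro Q hdeg hQ
    obtain ⟨c, rfl⟩ := low_deg_case m Q hQ hdeg
    exact Ideal.mul_mem_right c _ hG2mem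
  intro n
  induction n with
  | zero =>
      intro Q hdeg hQ
      exact hbase Q (fun s hs => le_trans (hdeg s hs) (by omega)) hQ
  | succ n ih =>
      intro Q hdeg hQ
      by_cases hnm : n + 1 ≤ m
      · exact hbase Q (fun s hs => le_trans (hdeg s hs) hnm) hQ
      · have hmn : m ≤ n := by omega
        set T := Q.support.filter (fun s => s 0 = n+1) with hT
        set L := ∑ s ∈ T, monomial (s - Finsupp.single 0 (m+1)) (coeff s Q) with hL
        -- X0^(m+1) * L
        have hX0L : (X 0 : MvPolynomial (Fin 2) ℂ) ^ (m+1) * L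
            = ∑ u ∈ T, monomial u (coeff u Q) := by
          rw [hL, Finset.mul_sum]
          apply Finset.sum_congr rfl
          intro u hu
          rw [X_pow_eq_monomial, monomial_mul, one_mul]
          have hu0 : u 0 = n + 1 := (Finset.mem_filter.1 hu).2
          have hexp : (Finsupp.single (0 : Fin 2) (m+1)) + (u - Finsupp.single 0 (m+1)) = u := by
            ext i
            rw [Finsupp.add_apply, Finsupp.tsub_apply]
            have h01 : i = 0 ∨ i = 1 := by omega
            rcases h01 with rfl | rfl <;> simp <;> omega
          rw [hexp]
        have hLsupp : ∀ s ∈ L.support, s 0 ≤ n - m := by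
          intro s hs
          have := MvPolynomial.support_sum hs
          rw [Finset.mem_biUnion] at this
          obtain ⟨u, hu, hsu⟩ := this
          by_cases hc : coeff u Q = 0
          · rw [hc, monomial_zero] at hsu
            simp at hsu
          · have hmono := MvPolynomial.support_monomial
              (s := u - Finsupp.single (0 : Fin 2) (m+1)) (a := coeff u Q)
            rw [if_neg hc] at hmono
            rw [hmono, Finset.mem_singleton] at hsu
            rw [hsu, Finsupp.tsub_apply]
            have hu0 : u 0 = n + 1 := (Finset.mem_filter.1 hu).2
            simp
            omega
        have hcomp : ∀ s : Fin 2 →₀ ℕ, n + 1 ≤ s 0 → coeff s (G1comp m * L) = 0 := by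
          intro s hs0
          rw [← notMem_support_iff]
          intro hmem
          have := MvPolynomial.support_mul _ _ hmem
          rw [Finset.mem_add] at this
          obtain ⟨u, hu, v, hv, rfl⟩ := this
          have h1 := G1comp_support m u hu
          have h2 := hLsupp v hv
          rw [Finsupp.add_apply] at hs0
          omega
        set Q' := Q - G1 m * L with hQ'
        have hQ'ap : apolar Q' (Pm m) = 0 := by
          rw [hQ', apolar_sub_left, hQ, mul_comm, apolar_mul, apolar_G1, apolar_zero_right,
            sub_zero]
        have hQ'supp : ∀ s ∈ Q'.support, s 0 ≤ n := by
          intro s hs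
          by_contra hc
          push_neg at hc
          have hcoeff : coeff s Q' = 0 := by
            rw [hQ', G1_split, add_mul, coeff_sub, coeff_add, hX0L, hcomp s (by omega),
              add_zero]
            have hsum : coeff s (∑ u ∈ T, monomial u (coeff u Q))
                = if s ∈ T then coeff s Q else 0 := by
              rw [coeff_sum]
              rw [Finset.sum_congr rfl (fun u _ => coeff_monomial s u (coeff u Q))]
              exact Finset.sum_ite_eq' T s (fun u => coeff u Q)
            rw [hsum]
            by_cases hsT : s ∈ T
            · rw [if_pos hsT, sub_self]
            · rw [if_neg hsT]
              have : coeff s Q = 0 := by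
                rw [← notMem_support_iff]
                intro hmem
                have hb := hdeg s hmem
                have : s 0 = n + 1 := by omega
                exact hsT (Finset.mem_filter.2 ⟨hmem, this⟩)
              rw [this, sub_zero]
          exact mem_support_iff.1 hs hcoeff
        have := ih Q' hQ'supp hQ'ap
        have hfin : Q = Q' + G1 m * L := by rw [hQ']; ring
        rw [hfin]
        exact Ideal.add_mem _ this (Ideal.mul_mem_right L _ hG1mem)

end

noncomputable section

lemma degree_fin2 (s : Fin 2 →₀ ℕ) : s.degree = s 0 + s 1 := by
  rw [Finsupp.degree, ← Fin.sum_univ_two (fun i => s i)]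
  apply Finset.sum_subset (Finset.subset_univ _)
  intro i _ hi
  exact Finsupp.notMem_support_iff.1 hi

lemma lin_form (p : MvPolynomial (Fin 2) ℂ) (hp : p.IsHomogeneous 1) :
    p = coeff (e 1 0) p • X 0 + coeff (e 0 1) p • X 1 := by
  have h10 : (Finsupp.single (0 : Fin 2) 1) = e 1 0 := by simp [e]
  have h01 : (Finsupp.single (1 : Fin 2) 1) = e 0 1 := by simp [e]
  ext s
  rw [coeff_add, coeff_smul, coeff_smul, coeff_X', coeff_X', h10, h01]
  by_cases hdeg : s 0 + s 1 = 1
  · have : (s 0 = 1 ∧ s 1 = 0) ∨ (s 0 = 0 ∧ s 1 = 1) := by omega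
    have hs := fin2_eq s
    rcases this with ⟨h1, h2⟩ | ⟨h1, h2⟩ <;> rw [h1, h2] at hs <;> subst hs
    · rw [if_pos rfl, if_neg (by
        intro hcontra
        have := DFunLike.congr_fun hcontra 0
        simp at this), smul_eq_mul, smul_eq_mul, mul_one, mul_zero, add_zero]
    · rw [if_neg (by
        intro hcontra
        have := DFunLike.congr_fun hcontra 0
        simp at this), if_pos rfl, smul_eq_mul, smul_eq_mul, mul_one, mul_zero, zero_add]
  · rw [hp.coeff_eq_zero (by rw [degree_fin2]; omega)]
    rw [if_neg (fun hcontra => by rw [← hcontra] at hdeg; simp at hdeg),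
      if_neg (fun hcontra => by rw [← hcontra] at hdeg; simp at hdeg)]
    simp

lemma apolar_X (i : Fin 2) (P : MvPolynomial (Fin 2) ℂ) :
    apolar (X i) P = pderiv i P := by
  have hX : (X i : MvPolynomial (Fin 2) ℂ) = monomial (Finsupp.single i 1) 1 := rfl
  rw [apolar, hX, diffOp_monomial, one_smul]
  have h01 : i = 0 ∨ i = 1 := by omega
  rcases h01 with rfl | rfl
  · rw [Finsupp.single_eq_same, Finsupp.single_eq_of_ne' (by decide : (0:Fin 2) ≠ 1),
      pow_one, pow_zero, mul_one]
    rfl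
  · rw [Finsupp.single_eq_of_ne' (by decide : (1:Fin 2) ≠ 0), Finsupp.single_eq_same,
      pow_zero, pow_one, one_mul]
    rfl

lemma apolar_dual (a b : ℂ) (n : ℕ) :
    apolar (b • X 0 - a • X 1) ((a • X 0 + b • X 1 : MvPolynomial (Fin 2) ℂ) ^ n) = 0 := by
  set lam : MvPolynomial (Fin 2) ℂ := a • X 0 + b • X 1 with hlam
  have h0 : pderiv (R := ℂ) (0 : Fin 2) lam = C a := by
    rw [hlam]
    simp [smul_eq_C_mul, pderiv_C_mul, pderiv_X_self, pderiv_X_of_ne (by decide : (1:Fin 2) ≠ 0)]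
  have h1 : pderiv (R := ℂ) (1 : Fin 2) lam = C b := by
    rw [hlam]
    simp [smul_eq_C_mul, pderiv_C_mul, pderiv_X_self, pderiv_X_of_ne (by decide : (0:Fin 2) ≠ 1)]
  rw [apolar_sub_left, apolar_smul_left, apolar_smul_left, apolar_X, apolar_X,
    pderiv_pow, pderiv_pow, h0, h1]
  rw [smul_eq_C_mul, smul_eq_C_mul]
  ring

end

noncomputable section

lemma vanish_of_low (m : ℕ) (μ : MvPolynomial (Fin 2) ℂ) (hQ : apolar μ (Pm m) = 0)
    (hd : μ.totalDegree ≤ m) : μ = 0 := by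
  have hsupp : ∀ s ∈ μ.support, s 0 + s 1 ≤ m := by
    intro s hs
    calc s 0 + s 1 = s.degree := (degree_fin2 s).symm
      _ ≤ μ.totalDegree := le_totalDegree hs
      _ ≤ m := hd
  have hdeg0 : ∀ s ∈ μ.support, s 0 ≤ m := fun s hs => by have := hsupp s hs; omega
  ext s
  rw [coeff_zero]
  by_cases hs : s 0 ≤ m ∧ s 1 ≤ m + 1
  · have := chain m μ hQ hdeg0 (s 1) (by omega) (s 0) (by omega)
    rwa [← fin2_eq s] at this
  · rw [← notMem_support_iff]
    intro hmem
    exact hs ⟨by have := hsupp s hmem; omega, by have := hsupp s hmem; omega⟩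

lemma rank_lower (m : ℕ) (r : ℕ) (lam : Fin r → MvPolynomial (Fin 2) ℂ)
    (hhom : ∀ i, (lam i).IsHomogeneous 1)
    (hsum : Pm m = ∑ i, lam i ^ (2 * m + 1)) : m + 1 ≤ r := by
  classical
  by_contra hc
  push_neg at hc
  have hrm : r ≤ m := by omega
  set a : Fin r → ℂ := fun i => coeff (e 1 0) (lam i) with ha
  set b : Fin r → ℂ := fun i => coeff (e 0 1) (lam i) with hb
  have hlam : ∀ i, lam i = a i • X 0 + b i • X 1 := fun i => lin_form (lam i) (hhom i)
  set mu : Fin r → MvPolynomial (Fin 2) ℂ := fun i => b i • X 0 - a i • X 1 with hmu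
  set T : Finset (Fin r) := Finset.univ.filter (fun i => lam i ≠ 0) with hT
  set M : MvPolynomial (Fin 2) ℂ := ∏ i ∈ T, mu i with hM
  have hmune : ∀ i ∈ T, mu i ≠ 0 := by
    intro i hi h0
    have hb0 : b i = 0 := by
      have := congrArg (coeff (e 1 0)) h0
      simpa [hmu, coeff_sub, coeff_smul, coeff_X', e, Finsupp.single_eq_single_iff] using this
    have ha0 : a i = 0 := by
      have := congrArg (coeff (e 0 1)) h0
      simpa [hmu, coeff_sub, coeff_smul, coeff_X', e, Finsupp.single_eq_single_iff] using this
    have : lam i = 0 := by rw [hlam i, ha0, hb0]; simp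
    exact (Finset.mem_filter.1 hi).2 this
  have hMne : M ≠ 0 := Finset.prod_ne_zero_iff.2 hmune
  have hmu1 : ∀ i, (mu i).totalDegree ≤ 1 := by
    intro i
    refine le_trans (totalDegree_sub _ _) (max_le ?_ ?_)
    · exact le_trans (totalDegree_smul_le _ _) (le_of_eq (totalDegree_X 0))
    · exact le_trans (totalDegree_smul_le _ _) (le_of_eq (totalDegree_X 1))
  have hMdeg : M.totalDegree ≤ m := by
    calc M.totalDegree ≤ ∑ i ∈ T, (mu i).totalDegree := totalDegree_finset_prod T mu
      _ ≤ ∑ _i ∈ T, 1 := Finset.sum_le_sum (fun i _ => hmu1 i)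
      _ = T.card := by rw [Finset.sum_const, smul_eq_mul, mul_one]
      _ ≤ r := le_trans (Finset.card_le_univ T) (by simp)
      _ ≤ m := hrm
  have hMapolar : apolar M (Pm m) = 0 := by
    rw [hsum]
    have hms : apolar M (∑ i, lam i ^ (2*m+1)) = ∑ i, apolar M (lam i ^ (2*m+1)) :=
      map_sum (diffOp M) _ _
    rw [hms]
    · apply Finset.sum_eq_zero
      intro i _
      by_cases hi : lam i = 0
      · rw [hi, zero_pow (by omega), apolar_zero_right]
      · have hiT : i ∈ T := Finset.mem_filter.2 ⟨Finset.mem_univ i, hi⟩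
        rw [hM, ← Finset.prod_erase_mul T mu hiT, apolar_mul, hlam i, apolar_dual,
          apolar_zero_right]
  exact hMne (vanish_of_low m M hMapolar hMdeg)

end

noncomputable section

lemma expand_pow (u : ℂ) (n : ℕ) :
    ((C u * X 0 - X 1 : MvPolynomial (Fin 2) ℂ)) ^ n
      = ∑ t ∈ Finset.range (n+1),
          C (u^t * (-1)^(n-t) * ((n.choose t : ℕ) : ℂ)) * monomial (e t (n-t)) 1 := by
  rw [sub_eq_add_neg, add_pow]
  apply Finset.sum_congr rfl
  intro t ht
  rw [← X_pow_mul_X_pow t (n-t), mul_pow, ← C_pow, neg_pow,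
    show ((-1 : MvPolynomial (Fin 2) ℂ)) = C (-1) by rw [map_neg, map_one],
    ← C_pow, ← C_eq_coe_nat (n.choose t), C_mul, C_mul]
  ring

lemma rank_upper (m : ℕ) (hm : 1 ≤ m) :
    ∃ lam : Fin (m+1) → MvPolynomial (Fin 2) ℂ,
      (∀ i, (lam i).IsHomogeneous 1) ∧ Pm m = ∑ i, lam i ^ (2*m+1) := by
  classical
  set ω : ℂ := Complex.exp (2 * Real.pi * Complex.I / (m+2)) with hω_def
  have hω : IsPrimitiveRoot ω (m+2) := by
    have := Complex.isPrimitiveRoot_exp (m+2) (by omega)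
    convert this using 2
    push_cast
    ring
  set N : ℕ := (2*m+1).choose m with hN_def
  have hNne : ((N : ℕ) : ℂ) ≠ 0 := Nat.cast_ne_zero.2 (Nat.choose_pos (by omega)).ne'
  have hm2ne : (((m+2 : ℕ)) : ℂ) ≠ 0 := Nat.cast_ne_zero.2 (by omega)
  set K : ℂ := ((-1 : ℂ)^(m+1)) / (((m+2 : ℕ) : ℂ) * N) with hK_def
  set c : ℕ → ℂ := fun j => K * ω^j * (ω^j - 1) with hc_def
  set S : ℕ → ℂ := fun u => ∑ j ∈ Finset.range (m+2), (ω^u)^j with hS_def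
  have hSm2 : S (m+2) = ((m+2 : ℕ) : ℂ) := by
    rw [hS_def]
    simp only [hω.pow_eq_one, one_pow]
    rw [Finset.sum_const, Finset.card_range, nsmul_eq_mul, mul_one]
  have hS0 : ∀ u : ℕ, 0 < u → u < 2*(m+2) → u ≠ m+2 → S u = 0 := by
    intro u h1 h2 h3
    have hne : ω^u ≠ 1 := by
      intro hone
      rw [hω.pow_eq_one_iff_dvd] at hone
      obtain ⟨k, hk⟩ := hone
      have : k = 0 ∨ k = 1 ∨ 2 ≤ k := by omega
      rcases this with rfl | rfl | hk2
      · omega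
      · omega
      · have : 2*(m+2) ≤ (m+2)*k := by
          calc 2*(m+2) = (m+2)*2 := by ring
            _ ≤ (m+2)*k := Nat.mul_le_mul_left _ hk2
        omega
    rw [hS_def]
    simp only
    rw [geom_sum_eq hne (m+2), ← pow_mul, mul_comm u (m+2), pow_mul, hω.pow_eq_one, one_pow,
      sub_self, zero_div]
  -- the sum over j of c j * (ω^t)^j
  have hD : ∀ t : ℕ, ∑ j ∈ Finset.range (m+2), c j * (ω^t)^j = K * (S (t+2) - S (t+1)) := by
    intro t
    have hpt : ∀ j : ℕ, c j * (ω^t)^j = K * ((ω^(t+2))^j - (ω^(t+1))^j) := by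
      intro j
      rw [hc_def]
      simp only
      rw [← pow_mul ω (t+2) j, ← pow_mul ω (t+1) j, ← pow_mul ω t j,
        show (t+2)*j = j + (j + t*j) by ring, show (t+1)*j = j + t*j by ring,
        pow_add, pow_add, pow_mul]
      ring
    rw [Finset.sum_congr rfl (fun j _ => hpt j), ← Finset.mul_sum, Finset.sum_sub_distrib]
  -- coefficient evaluation
  have hcoef : ∀ t ∈ Finset.range (2*m+2),
      (∑ j ∈ Finset.range (m+2), c j * (ω^t)^j)
          * ((-1 : ℂ)^(2*m+1-t) * (((2*m+1).choose t : ℕ) : ℂ))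
        = if t = m ∨ t = m+1 then 1 else 0 := by
    intro t ht
    rw [Finset.mem_range] at ht
    rw [hD t]
    by_cases htm : t = m
    · rw [htm]
      rw [hSm2, hS0 (m+1) (by omega) (by omega) (by omega)]
      rw [if_pos (Or.inl rfl), show 2*m+1-m = m+1 by omega, ← hN_def]
      have h1 : ((-1:ℂ))^(m+1) * (-1)^(m+1) = 1 := by
        rw [← pow_add]
        exact Even.neg_one_pow ⟨m+1, by ring⟩
      have hkey : K * (((m+2:ℕ):ℂ) - 0) * ((-1:ℂ)^(m+1) * N)
          = ((-1:ℂ)^(m+1) * (-1)^(m+1)) * ((((m+2:ℕ):ℂ) * N) / (((m+2:ℕ):ℂ) * N)) := by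
        rw [hK_def]
        ring
      rw [hkey, h1, div_self (mul_ne_zero hm2ne hNne), mul_one]
    by_cases htm1 : t = m+1
    · rw [htm1]
      rw [hSm2, hS0 (m+1+2) (by omega) (by omega) (by omega)]
      rw [if_pos (Or.inr rfl), show 2*m+1-(m+1) = m by omega]
      have hch : (((2*m+1).choose (m+1) : ℕ) : ℂ) = ((N:ℕ):ℂ) := by
        rw [hN_def, show m+1 = 2*m+1-m by omega, Nat.choose_symm (by omega)]
      rw [hch]
      have h1 : ((-1:ℂ))^m * (-1)^m = 1 := by
        rw [← pow_add]
        exact Even.neg_one_pow ⟨m, by ring⟩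
      have hkey : K * ((0:ℂ) - ((m+2:ℕ):ℂ)) * ((-1:ℂ)^m * ((N:ℕ):ℂ))
          = ((-1:ℂ)^m * (-1)^m) * ((((m+2:ℕ):ℂ) * N) / (((m+2:ℕ):ℂ) * N)) := by
        rw [hK_def, pow_succ]
        ring
      rw [hkey, h1, div_self (mul_ne_zero hm2ne hNne), mul_one]
    · rw [hS0 (t+2) (by omega) (by omega) (by omega),
        hS0 (t+1) (by omega) (by omega) (by omega), sub_self, mul_zero, zero_mul,
        if_neg (by tauto)]
  -- choose the roots
  have hz : ∀ i : Fin (m+1), ∃ z : ℂ, z ^ (2*m+1) = c (i.1+1) :=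
    fun i => IsAlgClosed.exists_pow_nat_eq (c (i.1+1)) (by omega)
  set z : Fin (m+1) → ℂ := fun i => Classical.choose (hz i) with hz_def
  have hzs : ∀ i : Fin (m+1), (z i) ^ (2*m+1) = c (i.1+1) := fun i => Classical.choose_spec (hz i)
  refine ⟨fun i => C (z i) * (C (ω^(i.1+1)) * X 0 - X 1), ?_, ?_⟩
  · intro i
    have h1 : ((C (z i) : MvPolynomial (Fin 2) ℂ)).IsHomogeneous 0 := isHomogeneous_C _ _
    have h2 : ((C (ω^(i.1+1)) : MvPolynomial (Fin 2) ℂ) * X 0).IsHomogeneous 1 := by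
      simpa using (isHomogeneous_C (Fin 2) (ω^(i.1+1))).mul (isHomogeneous_X ℂ 0)
    have h3 : ((C (ω^(i.1+1)) : MvPolynomial (Fin 2) ℂ) * X 0 - X 1).IsHomogeneous 1 :=
      h2.sub (isHomogeneous_X ℂ 1)
    simpa using h1.mul h3
  · -- the sum equals Pm m
    have hstep1 : ∀ i : Fin (m+1),
        (C (z i) * (C (ω^(i.1+1)) * X 0 - X 1)) ^ (2*m+1)
          = ∑ t ∈ Finset.range (2*m+2),
              C ((c (i.1+1) * (ω^t)^(i.1+1)) *
                ((-1 : ℂ)^(2*m+1-t) * (((2*m+1).choose t : ℕ) : ℂ)))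
                * monomial (e t (2*m+1-t)) 1 := by
      intro i
      rw [mul_pow, ← map_pow C (z i), hzs i, expand_pow, Finset.mul_sum]
      apply Finset.sum_congr rfl
      intro t _
      rw [← mul_assoc, ← C_mul, ← pow_right_comm]
      congr 2
      ring
    rw [Finset.sum_congr rfl (fun i _ => hstep1 i), Finset.sum_comm]
    have hstep2 : ∀ t ∈ Finset.range (2*m+2),
        (∑ i : Fin (m+1),
            C ((c (i.1+1) * (ω^t)^(i.1+1)) *
              ((-1 : ℂ)^(2*m+1-t) * (((2*m+1).choose t : ℕ) : ℂ)))
              * monomial (e t (2*m+1-t)) 1)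
          = C (if t = m ∨ t = m+1 then (1:ℂ) else 0) * monomial (e t (2*m+1-t)) 1 := by
      intro t ht
      rw [← Finset.sum_mul, ← map_sum]
      congr 2
      rw [← Finset.sum_mul]
      have hfin : (∑ i : Fin (m+1), c (i.1+1) * (ω^t)^(i.1+1))
          = ∑ j ∈ Finset.range (m+2), c j * (ω^t)^j := by
        rw [Fin.sum_univ_eq_sum_range (fun j => c (j+1) * (ω^t)^(j+1)) (m+1),
          Finset.sum_range_succ' (fun j => c j * (ω^t)^j) (m+1)]
        have hc0 : c 0 * (ω^t)^0 = 0 := by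
          rw [hc_def]
          simp
        rw [hc0, add_zero]
      rw [hfin]
      exact hcoef t ht
    rw [Finset.sum_congr rfl hstep2]
    have hsubset : ({m, m+1} : Finset ℕ) ⊆ Finset.range (2*m+2) := by
      intro x hx
      rw [Finset.mem_insert, Finset.mem_singleton] at hx
      rw [Finset.mem_range]
      omega
    rw [← Finset.sum_subset hsubset (fun x hx hnx => by
      rw [if_neg, map_zero, zero_mul]
      intro hor
      rcases hor with rfl | rfl
      · exact hnx (Finset.mem_insert_self _ _)
      · exact hnx (by rw [Finset.mem_insert, Finset.mem_singleton]; right; rfl))]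
    rw [Finset.sum_pair (by omega : m ≠ m+1)]
    rw [if_pos (Or.inl rfl), if_pos (Or.inr rfl), map_one, one_mul, one_mul,
      show 2*m+1-m = m+1 by omega, show 2*m+1-(m+1) = m by omega, Pm_eq, add_comm]

end


/-- For `m ≥ 1` and `P = X₀^m X₁^m (X₀ + X₁)`:
`Ann(P) = (∑_{k=0}^{m+1} (−1)^k X₀^{m+1−k} X₁^k, X₁^{m+2})` and `rk(P) = m + 1`. -/
theorem ann_special (m : ℕ) (hm : 1 ≤ m) :
    annIdeal ((X 0 : MvPolynomial (Fin 2) ℂ) ^ m * X 1 ^ m * (X 0 + X 1))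
        = Ideal.span
          {∑ k ∈ Finset.range (m + 2),
              (-1 : ℂ) ^ k • ((X 0 : MvPolynomial (Fin 2) ℂ) ^ (m + 1 - k) * X 1 ^ k),
            (X 1 : MvPolynomial (Fin 2) ℂ) ^ (m + 2)} ∧
      waringRank (2 * m + 1) ((X 0 : MvPolynomial (Fin 2) ℂ) ^ m * X 1 ^ m * (X 0 + X 1))
        = m + 1 := by
  constructor
  · show annIdeal (Pm m) = Ideal.span {G1 m, (X 1 : MvPolynomial (Fin 2) ℂ) ^ (m+2)}
    apply le_antisymm
    · intro Q hQ
      exact mem_span_of_apolar_zero m hm (Q.support.sup fun s => s 0) Q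
        (fun s hs => Finset.le_sup (f := fun s => s 0) hs) hQ
    · rw [Ideal.span_le]
      rintro x hx
      simp only [Set.mem_insert_iff, Set.mem_singleton_iff] at hx
      show apolar x (Pm m) = 0
      rcases hx with rfl | rfl
      · exact apolar_G1 m
      · exact apolar_G2 m
  · show waringRank (2*m+1) (Pm m) = m+1
    rw [waringRank]
    obtain ⟨lam, hhom, hsum⟩ := rank_upper m hm
    have hmem : (m+1) ∈ {r | ∃ lam : Fin r → MvPolynomial (Fin 2) ℂ,
        (∀ i, (lam i).IsHomogeneous 1) ∧ Pm m = ∑ i, lam i ^ (2*m+1)} := ⟨lam, hhom, hsum⟩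
    apply le_antisymm (Nat.sInf_le hmem)
    have hinf := Nat.sInf_mem (⟨m+1, hmem⟩ : Set.Nonempty _)
    obtain ⟨lam', hhom', hsum'⟩ := hinf
    exact rank_lower m _ lam' hhom' hsum'
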